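/- arXiv:1812.03209 — 2 statements merged into one kernel-verified Lean document; each statement's English description precedes it below -/
import Mathlib

section
/- Let 𝔤 = 𝔤⁺ ⊕ 𝔥 be a direct sum decomposition of the Lie algebra 𝔤 into subspaces, and define the holonomy maps hol_s : 𝔤⁺ × 𝔥 → 𝔤⁺ and hol_{uc} : 𝔤⁺ × 𝔥 → 𝔥 near (0,0) by the equation exp(E)exp(F) = exp(hol_{uc}(E,F))exp(hol_s(E,F)). Then there exist κ₁, κ₂ > 0 such that hol_s, hol_{uc} are well-defined for ‖(E,F)‖ ≤ κ₁ and satisfy max(‖hol_s(E,F) − E‖, ‖hol_{uc}(E,F) − F‖) ≤ κ₂‖E‖‖F‖. -/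
open NormedSpace Filter Topology


/-- Holonomy maps: given a direct sum decomposition `𝔤 = 𝔤⁺ ⊕ 𝔥` of the Lie algebra
(a finite-dimensional normed algebra `A`), there exist `κ₁, κ₂ > 0` such that for
`E ∈ 𝔤⁺`, `F ∈ 𝔥` with `‖E‖, ‖F‖ ≤ κ₁` there are `hol_uc(E,F) ∈ 𝔥` and
`hol_s(E,F) ∈ 𝔤⁺` with `exp(E)exp(F) = exp(hol_uc(E,F))exp(hol_s(E,F))` and
`max(‖hol_s(E,F) − E‖, ‖hol_uc(E,F) − F‖) ≤ κ₂‖E‖‖F‖`. -/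
theorem holonomy_maps_estimate
    {A : Type*} [NormedRing A] [NormedAlgebra ℝ A] [CompleteSpace A]
    [FiniteDimensional ℝ A]
    (gplus 𝔥 : Submodule ℝ A) (hcompl : IsCompl gplus 𝔥) :
    ∃ κ₁ > (0 : ℝ), ∃ κ₂ > (0 : ℝ),
      ∀ E ∈ gplus, ∀ F ∈ 𝔥, ‖E‖ ≤ κ₁ → ‖F‖ ≤ κ₁ →
        ∃ E' ∈ gplus, ∃ F' ∈ 𝔥,
          NormedSpace.exp E * NormedSpace.exp F
            = NormedSpace.exp F' * NormedSpace.exp E' ∧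
          max ‖E' - E‖ ‖F' - F‖ ≤ κ₂ * ‖E‖ * ‖F‖ := by
  classical
  let f : ↥gplus × ↥𝔥 → A := fun p => exp (p.2 : A) * exp (p.1 : A)
  let e : (↥gplus × ↥𝔥) ≃L[ℝ] A :=
    (Submodule.prodEquivOfIsCompl gplus 𝔥 hcompl).toContinuousLinearEquiv
  -- coercion maps as CLMs
  let L1 : (↥gplus × ↥𝔥) →L[ℝ] A := gplus.subtypeL.comp (ContinuousLinearMap.fst ℝ _ _)
  let L2 : (↥gplus × ↥𝔥) →L[ℝ] A := 𝔥.subtypeL.comp (ContinuousLinearMap.snd ℝ _ _)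
  have hc : HasStrictFDerivAt (fun p : ↥gplus × ↥𝔥 => exp (p.2 : A)) L2 0 := by
    have h2 : HasStrictFDerivAt (fun p : ↥gplus × ↥𝔥 => (p.2 : A)) L2 0 :=
      L2.hasStrictFDerivAt
    have h3 := (hasStrictFDerivAt_exp_zero (𝕂 := ℝ) (𝔸 := A)).comp (0 : ↥gplus × ↥𝔥)
      (by simpa using h2)
    simpa [show (1 : A →L[ℝ] A) = ContinuousLinearMap.id ℝ A from rfl] using h3
  have hd : HasStrictFDerivAt (fun p : ↥gplus × ↥𝔥 => exp (p.1 : A)) L1 0 := by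
    have h2 : HasStrictFDerivAt (fun p : ↥gplus × ↥𝔥 => (p.1 : A)) L1 0 :=
      L1.hasStrictFDerivAt
    have h3 := (hasStrictFDerivAt_exp_zero (𝕂 := ℝ) (𝔸 := A)).comp (0 : ↥gplus × ↥𝔥)
      (by simpa using h2)
    simpa [show (1 : A →L[ℝ] A) = ContinuousLinearMap.id ℝ A from rfl] using h3
  have hfd : HasStrictFDerivAt f (e : (↥gplus × ↥𝔥) →L[ℝ] A) 0 := by
    have := hc.mul' hd
    convert this using 1
    · rfl
    · rfl
    · rfl
    · rfl
    ext p <;>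
      simp [e, L1, L2, Submodule.coe_prodEquivOfIsCompl', exp_zero,
        ContinuousLinearMap.smulRight_apply, smul_eq_mul]
  have hf_def : f = fun p : ↥gplus × ↥𝔥 => exp (p.2 : A) * exp (p.1 : A) := rfl
  set g : A → ↥gplus × ↥𝔥 := hfd.localInverse f e 0 with hg_def
  obtain ⟨K, s, hs, hKlip⟩ := hfd.to_localInverse.exists_lipschitzOnWith
  obtain ⟨K', s', hs', hK'lip⟩ :=
    (hasStrictFDerivAt_exp_zero (𝕂 := ℝ) (𝔸 := A)).exists_lipschitzOnWith
  have hli : ∀ᶠ p in 𝓝 (0 : ↥gplus × ↥𝔥), g (f p) = p := hfd.eventually_left_inverse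
  have hri : ∀ᶠ y in 𝓝 (f 0), f (g y) = y := hfd.eventually_right_inverse
  -- the "wrong order" product map
  have c1 : Continuous (fun p : ↥gplus × ↥𝔥 => (p.1 : A)) :=
    continuous_subtype_val.comp continuous_fst
  have c2 : Continuous (fun p : ↥gplus × ↥𝔥 => (p.2 : A)) :=
    continuous_subtype_val.comp continuous_snd
  have hf0 : f 0 = 1 := by simp [hf_def, exp_zero]
  have hf2cont : ContinuousAt (fun p : ↥gplus × ↥𝔥 => exp (p.1 : A) * exp (p.2 : A)) 0 :=
    (((continuous_iff_continuousAt.2 fun x : A => (exp_analytic (𝕂 := ℝ) x).continuousAt).comp c1).mul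
      ((continuous_iff_continuousAt.2 fun x : A => (exp_analytic (𝕂 := ℝ) x).continuousAt).comp c2)).continuousAt
  have hf20 : (fun p : ↥gplus × ↥𝔥 => exp (p.1 : A) * exp (p.2 : A)) 0 = f 0 := by
    simp [hf_def]
  have hmem : {y | f (g y) = y} ∩ s ∈ 𝓝 (f 0) := inter_mem hri hs
  have Hall : ∀ᶠ p in 𝓝 (0 : ↥gplus × ↥𝔥),
      g (f p) = p ∧ f p ∈ s ∧
      (f (g (exp (p.1 : A) * exp (p.2 : A))) = exp (p.1 : A) * exp (p.2 : A)
        ∧ exp (p.1 : A) * exp (p.2 : A) ∈ s) ∧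
      (p.1 : A) ∈ s' ∧ (p.2 : A) ∈ s' := by
    refine hli.and <| Eventually.and ?_ <| Eventually.and ?_ <| Eventually.and ?_ ?_
    · exact hfd.continuousAt.preimage_mem_nhds hs
    · rw [hf0] at hmem
      have hpt : (fun p : ↥gplus × ↥𝔥 => exp (p.1 : A) * exp (p.2 : A)) 0 = 1 := by
        simp [exp_zero]
      exact hf2cont.preimage_mem_nhds (hpt ▸ hmem)
    · exact c1.continuousAt.preimage_mem_nhds (by simpa using hs')
    · exact c2.continuousAt.preimage_mem_nhds (by simpa using hs')
  obtain ⟨ε, hε, hball⟩ := Metric.eventually_nhds_iff.1 Hall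
  refine ⟨ε / 2, by positivity, (K : ℝ) * (2 * K' * K') + 1, by positivity, ?_⟩
  intro E hE F hF hEn hFn
  set p : ↥gplus × ↥𝔥 := (⟨E, hE⟩, ⟨F, hF⟩) with hp_def
  have hpd : dist p 0 < ε := by
    rw [dist_zero_right, Prod.norm_def]
    have h1 : ‖p.1‖ = ‖E‖ := rfl
    have h2 : ‖p.2‖ = ‖F‖ := rfl
    rw [h1, h2]
    exact lt_of_le_of_lt (max_le hEn hFn) (by linarith)
  obtain ⟨hleft, hfs, ⟨hrinv, hzs⟩, hE's, hF's⟩ := hball hpd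
  set z : A := exp E * exp F with hz_def
  refine ⟨((g z).1 : A), (g z).1.2, ((g z).2 : A), (g z).2.2, ?_, ?_⟩
  · -- the factorization: f (g z) = z
    have : f (g z) = z := hrinv
    rw [hf_def] at this
    exact this.symm
  · -- the quadratic estimate
    have h0s' : (0 : A) ∈ s' := mem_of_mem_nhds hs'
    have hexpE : ‖exp E - 1‖ ≤ (K' : ℝ) * ‖E‖ := by
      have := hK'lip.dist_le_mul _ hE's _ h0s'
      simpa [dist_eq_norm, exp_zero] using this
    have hexpF : ‖exp F - 1‖ ≤ (K' : ℝ) * ‖F‖ := by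
      have := hK'lip.dist_le_mul _ hF's _ h0s'
      simpa [dist_eq_norm, exp_zero] using this
    have hcomm : z - f p = (exp E - 1) * (exp F - 1) - (exp F - 1) * (exp E - 1) := by
      rw [hz_def, hf_def]
      simp only [hp_def]
      noncomm_ring
    have hcn : ‖z - f p‖ ≤ 2 * K' * K' * (‖E‖ * ‖F‖) := by
      rw [hcomm]
      calc ‖(exp E - 1) * (exp F - 1) - (exp F - 1) * (exp E - 1)‖
          ≤ ‖(exp E - 1) * (exp F - 1)‖ + ‖(exp F - 1) * (exp E - 1)‖ :=
            norm_sub_le _ _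
        _ ≤ ‖exp E - 1‖ * ‖exp F - 1‖ + ‖exp F - 1‖ * ‖exp E - 1‖ := by
            gcongr <;> exact norm_mul_le _ _
        _ ≤ (K' * ‖E‖) * (K' * ‖F‖) + (K' * ‖F‖) * (K' * ‖E‖) := by
            gcongr
        _ = 2 * K' * K' * (‖E‖ * ‖F‖) := by ring
    have hgz : ‖g z - p‖ ≤ (K : ℝ) * ‖z - f p‖ := by
      have h2 : dist (g z) (g (f p)) ≤ (K : ℝ) * dist z (f p) :=
        hKlip.dist_le_mul z hzs (f p) hfs
      rw [hleft] at h2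
      simpa [dist_eq_norm] using h2
    have hmax : max ‖((g z).1 : A) - E‖ ‖((g z).2 : A) - F‖ = ‖g z - p‖ := by
      rfl
    calc max ‖((g z).1 : A) - E‖ ‖((g z).2 : A) - F‖ = ‖g z - p‖ := hmax
      _ ≤ (K : ℝ) * ‖z - f p‖ := hgz
      _ ≤ (K : ℝ) * (2 * K' * K' * (‖E‖ * ‖F‖)) := by gcongr
      _ ≤ ((K : ℝ) * (2 * K' * K') + 1) * ‖E‖ * ‖F‖ := by nlinarith [norm_nonneg E, norm_nonneg F]
end

section
/- Let exp : 𝔤 → G be the exponential map of a Lie group G with Haar measure μ and Lebesgue measure Leb on 𝔤 (normalized so exp'(0) has Jacobian 1). For every ε' > 0 there exists ε'' > 0 such that for every measurable B ⊆ 𝔤 contained in the ball of radius ε'' about 0, one has (1−ε')Leb(B) ≤ μ(exp(B)) ≤ (1+ε')Leb(B). -/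
set_option linter.unusedSectionVars false
set_option maxHeartbeats 1000000

open MeasureTheory Filter Metric Set NormedSpace
open scoped Topology ENNReal NNReal

section AuxLemmas

variable {A : Type*} [NormedRing A] [NormedAlgebra ℝ A] [CompleteSpace A]
  [FiniteDimensional ℝ A] [MeasurableSpace A] [BorelSpace A]

private lemma units_val_measurable : Measurable (Units.val : Aˣ → A) :=
  measurable_iff_comap_le.2 le_rfl

private lemma map_val_mul_image (μ : Measure Aˣ) [μ.IsHaarMeasure] (c : Aˣ) {S : Set A}
    (hS : MeasurableSet S) :
    μ.map Units.val ((fun b => (c : A) * b) '' S) = μ.map Units.val S := by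
  have hmulA : MeasurableSet ((fun b : A => ((c⁻¹ : Aˣ) : A) * b) ⁻¹' S) :=
    ((continuous_const.mul continuous_id).measurable) hS
  have hmul : Measurable (fun u : Aˣ => c⁻¹ * u) := by
    intro s hs
    obtain ⟨t, ht, rfl⟩ := hs
    exact ⟨(fun a : A => ((c⁻¹ : Aˣ) : A) * a) ⁻¹' t,
      (continuous_const.mul continuous_id).measurable ht, rfl⟩
  have himg : (fun b => (c : A) * b) '' S = (fun b : A => ((c⁻¹ : Aˣ) : A) * b) ⁻¹' S := by
    ext b
    constructor
    · rintro ⟨s, hs, rfl⟩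
      simpa [Units.inv_mul_cancel_left] using hs
    · intro hb
      exact ⟨((c⁻¹ : Aˣ) : A) * b, hb, by simp [Units.mul_inv_cancel_left]⟩
  rw [himg, Measure.map_apply units_val_measurable hmulA,
    Measure.map_apply units_val_measurable hS]
  have hpre : (Units.val : Aˣ → A) ⁻¹' ((fun b : A => ((c⁻¹ : Aˣ) : A) * b) ⁻¹' S)
      = (fun u : Aˣ => c⁻¹ * u) ⁻¹' (Units.val ⁻¹' S) := rfl
  rw [hpre]
  conv_rhs => rw [← map_mul_left_eq_self μ c⁻¹]
  rw [Measure.map_apply hmul (units_val_measurable hS)]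

private lemma strict_key {G : A × A → A}
    (hG : HasStrictFDerivAt G (ContinuousLinearMap.snd ℝ A A) (0, 0))
    {δ : ℝ} (hδ : 0 < δ) :
    ∃ η > 0, ∀ a y : A, ‖a‖ < η → ‖y‖ < η → ‖G (a, y) - G (a, 0) - y‖ ≤ δ * ‖y‖ := by
  have h := Asymptotics.isLittleO_iff.mp hG.isLittleO hδ
  rw [Metric.eventually_nhds_iff] at h
  obtain ⟨η, ηpos, hη⟩ := h
  refine ⟨η, ηpos, fun a y ha hy => ?_⟩
  have hdist : dist (((a, y), (a, 0)) : (A × A) × (A × A)) ((0, 0), (0, 0)) < η := by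
    simp only [Prod.dist_eq, dist_zero_right, norm_zero]
    simp only [max_lt_iff]
    exact ⟨⟨ha, hy⟩, ha, ηpos⟩
  have := hη hdist
  simpa [Prod.norm_def, norm_nonneg, max_eq_right (norm_nonneg y)] using this

end AuxLemmas

/-- `exp` is almost measure-preserving near `0`: with `Leb` an additive Haar measure on
the Lie algebra (the finite-dimensional normed algebra `A`) and `μ` a Haar measure on
the group of units, normalized so that the derivative of `exp` at `0` is
measure-preserving, for every `ε' > 0` there is `ε'' > 0` such that every measurable
`B` inside the ball of radius `ε''` around `0` satisfies
`(1−ε')Leb(B) ≤ μ(exp(B)) ≤ (1+ε')Leb(B)`. -/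
theorem exp_almost_measure_preserving
    {A : Type*} [NormedRing A] [NormedAlgebra ℝ A] [CompleteSpace A]
    [FiniteDimensional ℝ A] [MeasurableSpace A] [BorelSpace A]
    (Leb : Measure A) [Leb.IsAddHaarMeasure]
    (μ : Measure Aˣ) [μ.IsHaarMeasure]
    (hnorm : Tendsto
      (fun r : ℝ => μ.map Units.val (NormedSpace.exp '' Metric.ball 0 r)
        / Leb (Metric.ball (0 : A) r))
      (nhdsWithin 0 (Set.Ioi 0)) (nhds 1)) :
    ∀ ε' > (0 : ℝ), ∃ ε'' > (0 : ℝ), ∀ B ⊆ Metric.ball (0 : A) ε'', MeasurableSet B →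
      ENNReal.ofReal (1 - ε') * Leb B ≤ μ.map Units.val (NormedSpace.exp '' B) ∧
      μ.map Units.val (NormedSpace.exp '' B) ≤ ENNReal.ofReal (1 + ε') * Leb B := by
  let +nondep : NormedAlgebra ℚ A := .restrictScalars ℚ ℝ A
  set μ' := μ.map Units.val with hμ'def
  -- it suffices to treat small ε'
  suffices H : ∀ ε : ℝ, 0 < ε → ε ≤ 1/2 → ∃ ε'' > (0 : ℝ),
      ∀ B ⊆ Metric.ball (0 : A) ε'', MeasurableSet B →
      ENNReal.ofReal (1 - ε) * Leb B ≤ μ' (NormedSpace.exp '' B) ∧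
      μ' (NormedSpace.exp '' B) ≤ ENNReal.ofReal (1 + ε) * Leb B by
    intro ε' hε'
    obtain ⟨ε'', hε''0, h⟩ := H (min ε' (1/2)) (lt_min hε' (by norm_num)) (min_le_right _ _)
    refine ⟨ε'', hε''0, fun B hB hBm => ?_⟩
    obtain ⟨h1, h2⟩ := h B hB hBm
    constructor
    · refine le_trans (mul_le_mul_left (ENNReal.ofReal_le_ofReal ?_) _) h1
      have := min_le_left ε' (1/2)
      linarith
    · refine le_trans h2 (mul_le_mul_left (ENNReal.ofReal_le_ofReal ?_) _)
      have := min_le_left ε' (1/2)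
      linarith
  intro ε hε hε2
  set n := Module.finrank ℝ A with hn
  -- choose δ
  obtain ⟨δ, hδ0, hδ1, hC1, hC2⟩ : ∃ δ : ℝ, 0 < δ ∧ δ < 1 ∧
      (1+δ)^(2*n+1) ≤ 1+ε ∧ (1-ε)*(1+δ)^(2*n+1) ≤ 1-δ := by
    have c1 : ContinuousAt (fun δ : ℝ => (1+δ)^(2*n+1)) 0 := by fun_prop
    have c2 : ContinuousAt (fun δ : ℝ => (1-ε)*(1+δ)^(2*n+1) + δ) 0 := by fun_prop
    have hv1 : ((1:ℝ)+0)^(2*n+1) < 1+ε := by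
      simp only [add_zero, one_pow]; linarith
    have hv2 : (1-ε)*((1:ℝ)+0)^(2*n+1) + 0 < 1 := by
      simp only [add_zero, one_pow, mul_one]; linarith
    have h1 : ∀ᶠ δ in 𝓝 (0:ℝ), (1+δ)^(2*n+1) < 1+ε :=
      c1.eventually_lt_const hv1
    have h2 : ∀ᶠ δ in 𝓝 (0:ℝ), (1-ε)*(1+δ)^(2*n+1) + δ < 1 :=
      c2.eventually_lt_const hv2
    have h3 : ∀ᶠ δ in 𝓝[>] (0:ℝ), ((1+δ)^(2*n+1) < 1+ε ∧ (1-ε)*(1+δ)^(2*n+1) + δ < 1) :=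
      eventually_nhdsWithin_of_eventually_nhds (h1.and h2)
    have h4 : ∀ᶠ δ in 𝓝[>] (0:ℝ), 0 < δ ∧ δ < 1 := by
      filter_upwards [Ioo_mem_nhdsGT_of_mem (Set.mem_Ico.2 ⟨le_rfl, zero_lt_one⟩)] with δ hδ
      exact ⟨hδ.1, hδ.2⟩
    obtain ⟨δ, hA, hB⟩ := (h3.and h4).exists
    exact ⟨δ, hB.1, hB.2, hA.1.le, by linarith [hA.2]⟩
  -- extract ball estimates from hnorm
  have hIcc : Set.Icc (ENNReal.ofReal (1-δ)) (ENNReal.ofReal (1+δ)) ∈ 𝓝 (1 : ℝ≥0∞) := by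
    refine Icc_mem_nhds ?_ ?_
    · exact lt_of_lt_of_le (ENNReal.ofReal_lt_one.2 (by linarith)) le_rfl
    · exact lt_of_le_of_lt le_rfl (ENNReal.one_lt_ofReal.2 (by linarith))
  obtain ⟨r₀, hr₀mem, hr₀⟩ := mem_nhdsGT_iff_exists_Ioo_subset.1 (hnorm.eventually hIcc)
  have hr₀pos : (0:ℝ) < r₀ := hr₀mem
  have hball : ∀ r : ℝ, 0 < r → r < r₀ →
      ENNReal.ofReal (1-δ) * Leb (ball (0:A) r) ≤ μ' (NormedSpace.exp '' ball 0 r) ∧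
      μ' (NormedSpace.exp '' ball 0 r) ≤ ENNReal.ofReal (1+δ) * Leb (ball (0:A) r) := by
    intro r h0 h1
    have h := hr₀ ⟨h0, h1⟩
    have hL0 : Leb (ball (0:A) r) ≠ 0 := (measure_ball_pos Leb 0 h0).ne'
    have hLt : Leb (ball (0:A) r) ≠ ⊤ := measure_ball_lt_top.ne
    exact ⟨(ENNReal.le_div_iff_mul_le (Or.inl hL0) (Or.inl hLt)).1 h.1,
      (ENNReal.div_le_iff_le_mul (Or.inl hL0) (Or.inl hLt)).1 h.2⟩
  -- partial homeomorphism from inverse function theorem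
  have hexp : HasStrictFDerivAt (exp : A → A) (1 : A →L[ℝ] A) 0 :=
    hasStrictFDerivAt_exp_zero
  have hexp' : HasStrictFDerivAt (exp : A → A)
      ((ContinuousLinearEquiv.refl ℝ A : A ≃L[ℝ] A) : A →L[ℝ] A) 0 := by
    exact hexp
  set φ := hexp'.toOpenPartialHomeomorph (exp) with hφdef
  have hφ : ⇑φ = exp := hexp'.toOpenPartialHomeomorph_coe
  have h0src : (0 : A) ∈ φ.source := hexp'.mem_toOpenPartialHomeomorph_source
  have h1tgt : (1 : A) ∈ φ.target := by
    have := hexp'.image_mem_toOpenPartialHomeomorph_target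
    rwa [NormedSpace.exp_zero] at this
  have hsymm : HasStrictFDerivAt (φ.symm : A → A)
      ((ContinuousLinearEquiv.refl ℝ A).symm : A →L[ℝ] A) 1 := by
    have h := hexp'.to_localInverse
    rw [NormedSpace.exp_zero] at h
    rwa [hexp'.localInverse_def] at h
  have hsymm1eq : φ.symm 1 = 0 := by
    have : φ 0 = 1 := by rw [hφ]; exact NormedSpace.exp_zero
    rw [← this]
    exact φ.left_inv h0src
  -- measurability of exponential images
  have himg : ∀ S : Set A, S ⊆ φ.source → MeasurableSet S →
      MeasurableSet (exp '' S) := by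
    intro S hs hm
    refine hm.image_of_continuousOn_injOn (exp_continuous.continuousOn) ?_
    have := φ.injOn
    rw [hφ] at this
    exact this.mono hs
  -- the two auxiliary maps
  set F : A × A → A := fun p => φ.symm (exp (-p.1) * exp (p.1 + p.2)) with hFdef
  set F' : A × A → A := fun p => φ.symm (exp p.1 * exp p.2) - p.1 with hF'def
  have hexpneg : HasStrictFDerivAt (exp : A → A) (1 : A →L[ℝ] A) (-(0 : A)) := by
    rw [neg_zero]; exact hexp
  have hexpadd : HasStrictFDerivAt (exp : A → A) (1 : A →L[ℝ] A) ((0 : A) + 0) := by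
    rw [add_zero]; exact hexp
  have h1 : HasStrictFDerivAt (fun p : A × A => exp (-p.1))
      ((1 : A →L[ℝ] A).comp (-(ContinuousLinearMap.fst ℝ A A))) ((0 : A), (0 : A)) :=
    hexpneg.comp ((0 : A), (0 : A)) (hasStrictFDerivAt_fst.neg)
  have h2 : HasStrictFDerivAt (fun p : A × A => exp (p.1 + p.2))
      ((1 : A →L[ℝ] A).comp
        (ContinuousLinearMap.fst ℝ A A + ContinuousLinearMap.snd ℝ A A)) ((0 : A), (0 : A)) :=
    hexpadd.comp ((0 : A), (0 : A)) (hasStrictFDerivAt_fst.add hasStrictFDerivAt_snd)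
  have hm := h1.mul' h2
  have hm' : HasStrictFDerivAt (fun p : A × A => exp (-p.1) * exp (p.1 + p.2))
      (ContinuousLinearMap.snd ℝ A A) ((0 : A), (0 : A)) := by
    refine hm.congr_fderiv ?_
    refine ContinuousLinearMap.ext fun p => ?_
    obtain ⟨u, v⟩ := p
    simp [ContinuousLinearMap.smulRight_apply, NormedSpace.exp_zero, smul_eq_mul]
  have hsymm1 : HasStrictFDerivAt (φ.symm : A → A)
      ((ContinuousLinearEquiv.refl ℝ A).symm : A →L[ℝ] A)
      ((fun p : A × A => exp (-p.1) * exp (p.1 + p.2)) ((0 : A), (0 : A))) := by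
    simpa [NormedSpace.exp_zero] using hsymm
  have hF : HasStrictFDerivAt F (ContinuousLinearMap.snd ℝ A A) ((0 : A), (0 : A)) := by
    have h := hsymm1.comp ((0 : A), (0 : A)) hm'
    exact h.congr_fderiv (ContinuousLinearMap.ext fun p => rfl)
  have h3 : HasStrictFDerivAt (fun p : A × A => exp p.1)
      ((1 : A →L[ℝ] A).comp (ContinuousLinearMap.fst ℝ A A)) ((0 : A), (0 : A)) :=
    hexp.comp ((0 : A), (0 : A)) hasStrictFDerivAt_fst
  have h4 : HasStrictFDerivAt (fun p : A × A => exp p.2)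
      ((1 : A →L[ℝ] A).comp (ContinuousLinearMap.snd ℝ A A)) ((0 : A), (0 : A)) :=
    hexp.comp ((0 : A), (0 : A)) hasStrictFDerivAt_snd
  have hm2 := h3.mul' h4
  have hsymm2 : HasStrictFDerivAt (φ.symm : A → A)
      ((ContinuousLinearEquiv.refl ℝ A).symm : A →L[ℝ] A)
      ((fun p : A × A => exp p.1 * exp p.2) ((0 : A), (0 : A))) := by
    simpa [NormedSpace.exp_zero] using hsymm
  have hF' : HasStrictFDerivAt F' (ContinuousLinearMap.snd ℝ A A) ((0 : A), (0 : A)) := by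
    have h := (hsymm2.comp ((0 : A), (0 : A)) hm2).sub hasStrictFDerivAt_fst
    refine h.congr_fderiv ?_
    refine ContinuousLinearMap.ext fun p => ?_
    obtain ⟨u, v⟩ := p
    simp [ContinuousLinearMap.smulRight_apply, NormedSpace.exp_zero, smul_eq_mul]
  -- quantitative estimates
  obtain ⟨η₁, hη₁, hE1⟩ := strict_key hF hδ0
  obtain ⟨η₂, hη₂, hE2⟩ := strict_key hF' hδ0
  -- membership of products in the target, near zero
  have hcont1 : ContinuousAt (fun p : A × A => exp (-p.1) * exp (p.1 + p.2))
      ((0 : A), (0 : A)) :=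
    (((exp_continuous.comp (continuous_fst.neg)).mul
      (exp_continuous.comp (continuous_fst.add continuous_snd)))).continuousAt
  have hcont2 : ContinuousAt (fun p : A × A => exp p.1 * exp p.2) ((0 : A), (0 : A)) :=
    (((exp_continuous.comp continuous_fst).mul
      (exp_continuous.comp continuous_snd))).continuousAt
  obtain ⟨η₃, hη₃, hT1⟩ : ∃ η > 0, ∀ a y : A, ‖a‖ < η → ‖y‖ < η →
      exp (-a) * exp (a + y) ∈ φ.target := by
    have hmem : (fun p : A × A => exp (-p.1) * exp (p.1 + p.2)) ⁻¹' φ.target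
        ∈ 𝓝 (((0 : A), (0 : A)) : A × A) := by
      apply hcont1
      rw [show (fun p : A × A => exp (-p.1) * exp (p.1 + p.2)) ((0 : A), (0 : A)) = 1 by
        simp [NormedSpace.exp_zero]]
      exact φ.open_target.mem_nhds h1tgt
    rw [Metric.mem_nhds_iff] at hmem
    obtain ⟨η, hη, hsub⟩ := hmem
    refine ⟨η, hη, fun a y ha hy => ?_⟩
    have hmem2 : ((a, y) : A × A) ∈ ball ((0 : A), (0 : A)) η := by
      simp only [mem_ball, Prod.dist_eq, dist_zero_right, max_lt_iff]
      exact ⟨ha, hy⟩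
    exact hsub hmem2
  obtain ⟨η₄, hη₄, hT2⟩ : ∃ η > 0, ∀ a y : A, ‖a‖ < η → ‖y‖ < η →
      exp a * exp y ∈ φ.target := by
    have hmem : (fun p : A × A => exp p.1 * exp p.2) ⁻¹' φ.target
        ∈ 𝓝 (((0 : A), (0 : A)) : A × A) := by
      apply hcont2
      rw [show (fun p : A × A => exp p.1 * exp p.2) ((0 : A), (0 : A)) = 1 by
        simp [NormedSpace.exp_zero]]
      exact φ.open_target.mem_nhds h1tgt
    rw [Metric.mem_nhds_iff] at hmem
    obtain ⟨η, hη, hsub⟩ := hmem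
    refine ⟨η, hη, fun a y ha hy => ?_⟩
    have hmem2 : ((a, y) : A × A) ∈ ball ((0 : A), (0 : A)) η := by
      simp only [mem_ball, Prod.dist_eq, dist_zero_right, max_lt_iff]
      exact ⟨ha, hy⟩
    exact hsub hmem2
  -- the source contains a ball
  obtain ⟨s₀, hs₀, hs₀sub⟩ : ∃ s₀ > 0, ball (0 : A) s₀ ⊆ φ.source :=
    Metric.mem_nhds_iff.1 (φ.open_source.mem_nhds h0src)
  -- choice of κ
  set κ := min (s₀/4) (min (r₀/4) (min η₁ (min η₂ (min η₃ η₄)))) with hκdef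
  have hκ0 : 0 < κ := by positivity
  have hκs₀ : κ ≤ s₀ / 4 := min_le_left _ _
  have t1 : κ ≤ min (r₀/4) (min η₁ (min η₂ (min η₃ η₄))) := min_le_right _ _
  have t2 : κ ≤ min η₁ (min η₂ (min η₃ η₄)) := t1.trans (min_le_right _ _)
  have t3 : κ ≤ min η₂ (min η₃ η₄) := t2.trans (min_le_right _ _)
  have t4 : κ ≤ min η₃ η₄ := t3.trans (min_le_right _ _)
  have hκr₀ : κ ≤ r₀ / 4 := t1.trans (min_le_left _ _)
  have hκη₁ : κ ≤ η₁ := t2.trans (min_le_left _ _)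
  have hκη₂ : κ ≤ η₂ := t3.trans (min_le_left _ _)
  have hκη₃ : κ ≤ η₃ := t4.trans (min_le_left _ _)
  have hκη₄ : κ ≤ η₄ := t4.trans (min_le_right _ _)
  have hballsrc : ball (0 : A) (4*κ) ⊆ φ.source := by
    refine subset_trans (ball_subset_ball ?_) hs₀sub
    linarith
  -- values of F, F' at y = 0
  have hF0 : ∀ a : A, F (a, 0) = 0 := by
    intro a
    have : exp (-a) * exp (a + 0) = 1 := by
      rw [add_zero, ← exp_add_of_commute ((Commute.refl a).neg_left), neg_add_cancel,
        NormedSpace.exp_zero]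
    show φ.symm (exp (-a) * exp (a + 0)) = 0
    rw [this, hsymm1eq]
  have hF'0 : ∀ a : A, ‖a‖ < κ → F' (a, 0) = 0 := by
    intro a ha
    have hmem : a ∈ φ.source := hs₀sub (by
      rw [mem_ball_zero_iff]
      linarith)
    have h1 : exp a * exp (0 : A) = exp a := by rw [NormedSpace.exp_zero, mul_one]
    show φ.symm (exp a * exp (0:A)) - a = 0
    rw [h1, ← hφ, φ.left_inv hmem, sub_self]
  -- Step 1 : comparison on closed balls
  have step1 : ∀ x : A, ∀ r : ℝ, ‖x‖ < κ → 0 < r → r < κ →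
      ENNReal.ofReal (1-ε) * Leb (closedBall x r) ≤ μ' (exp '' closedBall x r) ∧
      μ' (exp '' closedBall x r) ≤ ENNReal.ofReal (1+ε) * Leb (closedBall x r) := by
    intro x r hx hr hrκ
    set c := (NormedSpace.isUnit_exp x).unit with hcdef
    have hc : (c : A) = exp x := (NormedSpace.isUnit_exp x).unit_spec
    have hxsrc : x ∈ φ.source := hs₀sub (by rw [mem_ball_zero_iff]; linarith [hκs₀, hs₀])
    -- upper inclusion
    have hsubU : exp '' closedBall x r ⊆
        (fun b => (c : A) * b) '' (exp '' ball 0 ((1+δ)^2*r)) := by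
      rintro - ⟨b, hb, rfl⟩
      have hb' : b = x + (b - x) := by abel
      set y := b - x with hydef
      have hy : ‖y‖ ≤ r := by
        rw [mem_closedBall, dist_eq_norm] at hb
        exact hb
      have hyκ : ‖y‖ < κ := lt_of_le_of_lt hy hrκ
      have hmem : exp (-x) * exp (x + y) ∈ φ.target :=
        hT1 x y (lt_of_lt_of_le hx hκη₃) (lt_of_lt_of_le hyκ hκη₃)
      have hid : exp (x + y) = exp x * exp (F (x, y)) := by
        have h1 : exp (F (x, y)) = exp (-x) * exp (x + y) := by
          have := φ.right_inv hmem
          rw [hφ] at this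
          exact this
        rw [h1, ← mul_assoc, ← exp_add_of_commute ((Commute.refl x).neg_right),
          add_neg_cancel, NormedSpace.exp_zero, one_mul]
      have hbd : ‖F (x, y)‖ ≤ (1+δ)*‖y‖ := by
        have h := hE1 x y (lt_of_lt_of_le hx hκη₁) (lt_of_lt_of_le hyκ hκη₁)
        rw [hF0 x, sub_zero] at h
        calc ‖F (x, y)‖ = ‖(F (x, y) - y) + y‖ := by rw [sub_add_cancel]
          _ ≤ ‖F (x, y) - y‖ + ‖y‖ := norm_add_le _ _
          _ ≤ δ*‖y‖ + ‖y‖ := by linarith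
          _ = (1+δ)*‖y‖ := by ring
      refine ⟨exp (F (x, y)), ⟨F (x, y), ?_, rfl⟩, ?_⟩
      · rw [mem_ball_zero_iff]
        calc ‖F (x, y)‖ ≤ (1+δ)*‖y‖ := hbd
          _ ≤ (1+δ)*r := mul_le_mul_of_nonneg_left hy (by linarith)
          _ < (1+δ)^2*r := by
            rw [pow_two]
            nlinarith [mul_pos hδ0 hr, mul_nonneg (mul_nonneg hδ0.le hδ0.le) hr.le]
      · show (c : A) * exp (F (x, y)) = exp b
        rw [hc, ← hid, ← hb']
    -- lower inclusion
    have hsubL : (fun b => (c : A) * b) '' (exp '' ball 0 (r/(1+δ))) ⊆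
        exp '' closedBall x r := by
      rintro - ⟨-, ⟨z, hz, rfl⟩, rfl⟩
      rw [mem_ball_zero_iff] at hz
      have hzr : ‖z‖ < r := lt_of_lt_of_le hz (le_of_lt (div_lt_self hr (by linarith)))
      have hzκ : ‖z‖ < κ := lt_trans hzr hrκ
      have hmem : exp x * exp z ∈ φ.target :=
        hT2 x z (lt_of_lt_of_le hx hκη₄) (lt_of_lt_of_le hzκ hκη₄)
      have hid : exp x * exp z = exp (x + F' (x, z)) := by
        have h1 : x + F' (x, z) = φ.symm (exp x * exp z) := by
          show x + (φ.symm (exp x * exp z) - x) = φ.symm (exp x * exp z)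
          abel
        rw [h1]
        have := φ.right_inv hmem
        rw [hφ] at this
        exact this.symm
      have hbd : ‖F' (x, z)‖ ≤ (1+δ)*‖z‖ := by
        have h := hE2 x z (lt_of_lt_of_le hx hκη₂) (lt_of_lt_of_le hzκ hκη₂)
        rw [hF'0 x hx, sub_zero] at h
        calc ‖F' (x, z)‖ = ‖(F' (x, z) - z) + z‖ := by rw [sub_add_cancel]
          _ ≤ ‖F' (x, z) - z‖ + ‖z‖ := norm_add_le _ _
          _ ≤ δ*‖z‖ + ‖z‖ := by linarith
          _ = (1+δ)*‖z‖ := by ring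
      refine ⟨x + F' (x, z), ?_, ?_⟩
      swap
      · show exp (x + F' (x, z)) = (c : A) * exp z
        rw [hc, ← hid]
      rw [mem_closedBall, dist_eq_norm]
      have : x + F' (x, z) - x = F' (x, z) := by abel
      rw [this]
      calc ‖F' (x, z)‖ ≤ (1+δ)*‖z‖ := hbd
        _ ≤ (1+δ)*(r/(1+δ)) := mul_le_mul_of_nonneg_left hz.le (by linarith)
        _ = r := by field_simp
    -- measures of balls
    have hLb : Leb (closedBall x r) = ENNReal.ofReal (r^n) * Leb (ball (0:A) 1) :=
      Measure.addHaar_closedBall Leb x hr.le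
    have hsU : (0:ℝ) < (1+δ)^2*r := by positivity
    have hsU' : (1+δ)^2*r < r₀ := by
      have h4 : (1+δ)^2 ≤ 4 := by nlinarith
      have h5 : (1+δ)^2*r ≤ 4*r := by nlinarith
      linarith
    have hsL : (0:ℝ) < r/(1+δ) := by positivity
    have hsL' : r/(1+δ) < r₀ := by
      have h1 : r/(1+δ) < r := div_lt_self hr (by linarith)
      have h2 : r < r₀ := by linarith
      linarith
    have hsrcU : ball (0:A) ((1+δ)^2*r) ⊆ φ.source := by
      have h4 : (1+δ)^2 ≤ 4 := by nlinarith
      have h5 : (1+δ)^2*r ≤ 4*r := by nlinarith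
      exact subset_trans (ball_subset_ball (by linarith)) hballsrc
    have hmeasU : MeasurableSet (exp '' ball (0:A) ((1+δ)^2*r)) :=
      himg _ hsrcU measurableSet_ball
    have hsrcL : ball (0:A) (r/(1+δ)) ⊆ φ.source := by
      have h1 : r/(1+δ) ≤ r := le_of_lt (div_lt_self hr (by linarith))
      exact subset_trans (ball_subset_ball (by linarith)) hballsrc
    have hmeasL : MeasurableSet (exp '' ball (0:A) (r/(1+δ))) :=
      himg _ hsrcL measurableSet_ball
    constructor
    · -- lower bound
      calc ENNReal.ofReal (1-ε) * Leb (closedBall x r)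
          = ENNReal.ofReal (1-ε) * (ENNReal.ofReal (r^n) * Leb (ball (0:A) 1)) := by rw [hLb]
        _ = ENNReal.ofReal ((1-ε) * r^n) * Leb (ball (0:A) 1) := by
            rw [← mul_assoc, ← ENNReal.ofReal_mul (by linarith)]
        _ ≤ ENNReal.ofReal ((1-δ) * (r/(1+δ))^n) * Leb (ball (0:A) 1) := by
            refine mul_le_mul_left (ENNReal.ofReal_le_ofReal ?_) _
            rw [div_pow, ← mul_div_assoc]
            rw [le_div_iff₀ (by positivity)]
            calc (1-ε)*r^n*(1+δ)^n ≤ (1-ε)*(1+δ)^(2*n+1)*r^n := by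
                  rw [mul_right_comm]
                  refine mul_le_mul_of_nonneg_right ?_ (by positivity)
                  refine mul_le_mul_of_nonneg_left ?_ (by linarith)
                  refine pow_le_pow_right₀ (by linarith) (by omega)
              _ ≤ (1-δ)*r^n := mul_le_mul_of_nonneg_right hC2 (by positivity)
        _ = ENNReal.ofReal (1-δ) * (ENNReal.ofReal ((r/(1+δ))^n) * Leb (ball (0:A) 1)) := by
            rw [← mul_assoc, ← ENNReal.ofReal_mul (by linarith)]
        _ = ENNReal.ofReal (1-δ) * Leb (ball (0:A) (r/(1+δ))) := by
            rw [Measure.addHaar_ball_of_pos Leb 0 hsL]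
        _ ≤ μ' (exp '' ball 0 (r/(1+δ))) := (hball _ hsL hsL').1
        _ = μ' ((fun b => (c : A) * b) '' (exp '' ball 0 (r/(1+δ)))) :=
            (map_val_mul_image μ c hmeasL).symm
        _ ≤ μ' (exp '' closedBall x r) := measure_mono hsubL
    · -- upper bound
      calc μ' (exp '' closedBall x r)
          ≤ μ' ((fun b => (c : A) * b) '' (exp '' ball 0 ((1+δ)^2*r))) :=
            measure_mono hsubU
        _ = μ' (exp '' ball 0 ((1+δ)^2*r)) := map_val_mul_image μ c hmeasU
        _ ≤ ENNReal.ofReal (1+δ) * Leb (ball (0:A) ((1+δ)^2*r)) := (hball _ hsU hsU').2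
        _ = ENNReal.ofReal (1+δ) * (ENNReal.ofReal (((1+δ)^2*r)^n) * Leb (ball (0:A) 1)) := by
            rw [Measure.addHaar_ball_of_pos Leb 0 hsU]
        _ = ENNReal.ofReal ((1+δ) * ((1+δ)^2*r)^n) * Leb (ball (0:A) 1) := by
            rw [← mul_assoc, ← ENNReal.ofReal_mul (by linarith)]
        _ ≤ ENNReal.ofReal ((1+ε) * r^n) * Leb (ball (0:A) 1) := by
            refine mul_le_mul_left (ENNReal.ofReal_le_ofReal ?_) _
            have h1 : ((1+δ)^2*r)^n = (1+δ)^(2*n) * r^n := by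
              rw [mul_pow, ← pow_mul]
            rw [h1]
            calc (1+δ)*((1+δ)^(2*n)*r^n) = (1+δ)^(2*n+1)*r^n := by ring
              _ ≤ (1+ε)*r^n := mul_le_mul_of_nonneg_right hC1 (by positivity)
        _ = ENNReal.ofReal (1+ε) * Leb (closedBall x r) := by
            rw [hLb, ← mul_assoc, ← ENNReal.ofReal_mul (by linarith)]
  -- Step 2 : the pulled-back measure ν
  set T := φ '' (ball (0:A) κ) with hTdef
  have hκsrc : ball (0:A) κ ⊆ φ.source := by
    refine subset_trans (ball_subset_ball ?_) hs₀sub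
    linarith
  have hTopen : IsOpen T := φ.isOpen_image_of_subset_source isOpen_ball hκsrc
  have hTsubtgt : T ⊆ φ.target := by
    rintro - ⟨u, hu, rfl⟩
    exact φ.map_source (hκsrc hu)
  set ν := Measure.map (φ.symm : A → A) (μ'.restrict T) with hνdef
  have hφsymm_ae : AEMeasurable (φ.symm : A → A) (μ'.restrict T) :=
    (φ.continuousOn_symm.mono hTsubtgt).aemeasurable hTopen.measurableSet
  have hν : ∀ S : Set A, S ⊆ ball (0:A) κ → MeasurableSet S → ν S = μ' (exp '' S) := by
    intro S hSsub hSm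
    rw [hνdef, Measure.map_apply_of_aemeasurable hφsymm_ae hSm,
      Measure.restrict_apply' hTopen.measurableSet]
    congr 1
    ext w
    constructor
    · rintro ⟨hw1, u, hu, rfl⟩
      have hus : u ∈ φ.source := hκsrc hu
      have heq : φ.symm (φ u) = u := φ.left_inv hus
      rw [mem_preimage, heq] at hw1
      exact ⟨u, hw1, by rw [← hφ]⟩
    · rintro ⟨u, hu, rfl⟩
      have hus : u ∈ φ.source := hκsrc (hSsub hu)
      have h1 : exp u = φ u := by rw [hφ]
      constructor
      · rw [mem_preimage, h1, φ.left_inv hus]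
        exact hu
      · exact ⟨u, hSsub hu, h1.symm⟩
  have hKsub : closedBall (0:A) κ ⊆ φ.source := by
    intro y hy
    apply hs₀sub
    rw [mem_ball_zero_iff]
    rw [mem_closedBall, dist_zero_right] at hy
    linarith
  haveI hνfin : IsFiniteMeasure ν := by
    constructor
    rw [hνdef, Measure.map_apply_of_aemeasurable hφsymm_ae MeasurableSet.univ, preimage_univ,
      Measure.restrict_apply' hTopen.measurableSet, univ_inter]
    have hK : IsCompact (φ '' closedBall (0:A) κ) :=
      (isCompact_closedBall (0:A) κ).image_of_continuousOn (φ.continuousOn.mono hKsub)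
    have hTK : T ⊆ φ '' closedBall (0:A) κ := image_mono ball_subset_closedBall
    have hKrange : φ '' closedBall (0:A) κ ⊆ range (Units.val : Aˣ → A) := by
      rintro - ⟨u, hu, rfl⟩
      have : φ u = exp u := by rw [hφ]
      rw [this]
      exact ⟨(NormedSpace.isUnit_exp u).unit, (NormedSpace.isUnit_exp u).unit_spec⟩
    have hcpre : IsCompact ((Units.val : Aˣ → A) ⁻¹' (φ '' closedBall (0:A) κ)) :=
      (Units.isOpenEmbedding_val.isEmbedding.isInducing.isCompact_preimage_iff hKrange).2 hK
    calc μ' T ≤ μ' (φ '' closedBall (0:A) κ) := measure_mono hTK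
      _ = μ ((Units.val : Aˣ → A) ⁻¹' (φ '' closedBall (0:A) κ)) := by
          rw [hμ'def, Measure.map_apply units_val_measurable hK.isClosed.measurableSet]
      _ < ⊤ := hcpre.measure_lt_top
  -- conclusion
  refine ⟨κ/2, by positivity, ?_⟩
  intro B hB hBm
  have hBκ : B ⊆ ball (0:A) κ := hB.trans (ball_subset_ball (by linarith))
  have hcball : ∀ x ∈ B, ∀ r ∈ Set.Ioo (0:ℝ) (κ/2), closedBall x r ⊆ ball (0:A) κ := by
    intro x hx r hr yy hyy
    have hxκ : ‖x‖ < κ/2 := mem_ball_zero_iff.1 (hB hx)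
    rw [mem_ball_zero_iff]
    rw [mem_closedBall, dist_eq_norm] at hyy
    calc ‖yy‖ = ‖(yy - x) + x‖ := by rw [sub_add_cancel]
      _ ≤ ‖yy - x‖ + ‖x‖ := norm_add_le _ _
      _ < κ := by linarith [hr.2]
  constructor
  · -- lower bound
    have hfreq : ∀ x ∈ B, ∃ᶠ a in (Besicovitch.vitaliFamily Leb).filterAt x,
        (ENNReal.ofReal (1-ε) • Leb) a ≤ ν a := by
      intro x hx
      have hxκ : ‖x‖ < κ/2 := mem_ball_zero_iff.1 (hB hx)
      refine (Besicovitch.tendsto_filterAt Leb x).frequently (Eventually.frequently ?_)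
      filter_upwards [Ioo_mem_nhdsGT_of_mem (Set.mem_Ico.2 ⟨le_rfl, half_pos hκ0⟩)] with r hr
      rw [Measure.smul_apply, smul_eq_mul, hν _ (hcball x hx r hr) measurableSet_closedBall]
      exact (step1 x r (by linarith) hr.1 (by linarith [hr.2])).1
    have h := (Besicovitch.vitaliFamily Leb).measure_le_of_frequently_le ν
      Measure.smul_absolutelyContinuous B hfreq
    rw [hν B hBκ hBm] at h
    simpa [Measure.smul_apply, smul_eq_mul] using h
  · -- upper bound
    haveI : IsFiniteMeasureOnCompacts (ENNReal.ofReal (1+ε) • Leb) :=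
      IsFiniteMeasureOnCompacts.smul Leb ENNReal.ofReal_ne_top
    have hfreq : ∀ x ∈ B, ∃ᶠ a in (Besicovitch.vitaliFamily ν).filterAt x,
        ν a ≤ (ENNReal.ofReal (1+ε) • Leb) a := by
      intro x hx
      have hxκ : ‖x‖ < κ/2 := mem_ball_zero_iff.1 (hB hx)
      refine (Besicovitch.tendsto_filterAt ν x).frequently (Eventually.frequently ?_)
      filter_upwards [Ioo_mem_nhdsGT_of_mem (Set.mem_Ico.2 ⟨le_rfl, half_pos hκ0⟩)] with r hr
      rw [Measure.smul_apply, smul_eq_mul, hν _ (hcball x hx r hr) measurableSet_closedBall]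
      exact (step1 x r (by linarith) hr.1 (by linarith [hr.2])).2
    have h := (Besicovitch.vitaliFamily ν).measure_le_of_frequently_le
      (ENNReal.ofReal (1+ε) • Leb) Measure.AbsolutelyContinuous.rfl B hfreq
    rw [hν B hBκ hBm] at h
    simpa [Measure.smul_apply, smul_eq_mul] using h
end
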